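/- There exists an absolute constant C > 0 such that for all signs ε₀, ε₁, ε₂, ε₃ ∈ {−1, +1}, all real numbers N₁₂, N₂, N₃ ≥ 1, all m ∈ ℤ, and every fixed n ∈ ℤ³, the number of triples (q, n₂, n₃) ∈ (ℤ³)³ with ⟨q⟩ ∼ N₁₂, ⟨n₂⟩ ∼ N₂, ⟨n₃⟩ ∼ N₃, q + n₃ = n, and |ε₀⟨n⟩ + ε₁⟨q − n₂⟩ + ε₂⟨n₂⟩ + ε₃⟨n₃⟩ − m| ≤ 1 is at most C · min(N₁₂, N₂)⁻¹ · (N₁₂ N₂)³. (Here q plays the role of n₁₂ and q − n₂ the role of n₁.) -/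

import Mathlib

noncomputable section

/-- The Japanese bracket `⟨n⟩ := (1 + |n|²)^(1/2)` of a lattice point `n ∈ ℤ³`. -/
def jap (n : Fin 3 → ℤ) : ℝ := Real.sqrt (1 + ∑ i, ((n i : ℝ)) ^ 2)

/-- The Japanese bracket `⟨m⟩ := (1 + m²)^(1/2)` of an integer `m`. -/
def japZ (m : ℤ) : ℝ := Real.sqrt (1 + (m : ℝ) ^ 2)

/-- Dyadic localization `⟨n⟩ ∼ N`, i.e. `N ≤ ⟨n⟩ ≤ 2N`. -/
def dy (N : ℝ) (n : Fin 3 → ℤ) : Prop := N ≤ jap n ∧ jap n ≤ 2 * N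

open Classical in
/-- The real-valued indicator `1{P}` of a proposition `P`. -/
def ind (P : Prop) : ℝ := if P then 1 else 0

/-- `ε ∈ {-1, +1}`. -/
def IsSign (ε : ℝ) : Prop := ε = 1 ∨ ε = -1

/-- The median of three real numbers. -/
def med3 (a b c : ℝ) : ℝ := max (min a b) (min (max a b) c)

/-- The cubic phase `φ(n₁,n₂,n₃) = ε₀⟨n₁₂₃⟩ + ε₁⟨n₁⟩ + ε₂⟨n₂⟩ + ε₃⟨n₃⟩`. -/
def phase3 (ε₀ ε₁ ε₂ ε₃ : ℝ) (n₁ n₂ n₃ : Fin 3 → ℤ) : ℝ :=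
  ε₀ * jap (n₁ + n₂ + n₃) + ε₁ * jap n₁ + ε₂ * jap n₂ + ε₃ * jap n₃

/-- The symmetrization `V̂_S(n₁,n₂,n₃) := (1/6) Σ_{π ∈ S₃} V̂(n_{π(1)} + n_{π(2)})`,
written out over the six permutations of `{1,2,3}`. -/
def VS (V : (Fin 3 → ℤ) → ℂ) (n₁ n₂ n₃ : Fin 3 → ℤ) : ℂ :=
  (V (n₁ + n₂) + V (n₂ + n₁) + V (n₁ + n₃) + V (n₃ + n₁) + V (n₂ + n₃) + V (n₃ + n₂)) / 6


open MeasureTheory Finset Real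
open scoped ENNReal

/-- real Japanese bracket -/
def japR (y : Fin 3 → ℝ) : ℝ := Real.sqrt (1 + ∑ i, (y i) ^ 2)

lemma sum_sq_nonneg (y : Fin 3 → ℝ) : 0 ≤ ∑ i, (y i) ^ 2 :=
  Finset.sum_nonneg fun _ _ => sq_nonneg _

lemma japR_nonneg (y : Fin 3 → ℝ) : 0 ≤ japR y := Real.sqrt_nonneg _

lemma one_le_japR (y : Fin 3 → ℝ) : 1 ≤ japR y := by
  rw [japR]
  have := Real.sqrt_le_sqrt (show (1:ℝ) ≤ 1 + ∑ i, (y i) ^ 2 by linarith [sum_sq_nonneg y])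
  simpa using this

lemma japR_sq (y : Fin 3 → ℝ) : japR y ^ 2 = 1 + ∑ i, (y i) ^ 2 :=
  Real.sq_sqrt (by linarith [sum_sq_nonneg y])

lemma jap_eq_japR (x : Fin 3 → ℤ) : jap x = japR (fun i => (x i : ℝ)) := rfl

/-- sqrt of sum of squares is subadditive (Minkowski). -/
lemma sqrt_sum_sq_add (u w : Fin 3 → ℝ) :
    Real.sqrt (∑ i, (u i + w i) ^ 2) ≤
      Real.sqrt (∑ i, (u i) ^ 2) + Real.sqrt (∑ i, (w i) ^ 2) := by
  have hcs := Finset.sum_mul_sq_le_sq_mul_sq Finset.univ u w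
  have h1 : (∑ i, u i * w i) ≤ Real.sqrt (∑ i, (u i) ^ 2) * Real.sqrt (∑ i, (w i) ^ 2) := by
    rw [← Real.sqrt_mul (sum_sq_nonneg u)]
    calc (∑ i, u i * w i) ≤ |∑ i, u i * w i| := le_abs_self _
      _ = Real.sqrt ((∑ i, u i * w i) ^ 2) := (Real.sqrt_sq_eq_abs _).symm
      _ ≤ _ := Real.sqrt_le_sqrt hcs
  have hL : (∑ i, (u i + w i) ^ 2) ≤
      (Real.sqrt (∑ i, (u i) ^ 2) + Real.sqrt (∑ i, (w i) ^ 2)) ^ 2 := by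
    have e1 : (∑ i, (u i + w i) ^ 2) = (∑ i, (u i)^2) + 2 * (∑ i, u i * w i) + ∑ i, (w i)^2 := by
      simp [Fin.sum_univ_three]; ring
    have e2 : Real.sqrt (∑ i, (u i) ^ 2) ^ 2 = ∑ i, (u i) ^ 2 := Real.sq_sqrt (sum_sq_nonneg u)
    have e3 : Real.sqrt (∑ i, (w i) ^ 2) ^ 2 = ∑ i, (w i) ^ 2 := Real.sq_sqrt (sum_sq_nonneg w)
    nlinarith [h1]
  have hb : 0 ≤ Real.sqrt (∑ i, (u i) ^ 2) + Real.sqrt (∑ i, (w i) ^ 2) :=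
    add_nonneg (Real.sqrt_nonneg _) (Real.sqrt_nonneg _)
  calc Real.sqrt (∑ i, (u i + w i) ^ 2)
      ≤ Real.sqrt ((Real.sqrt (∑ i, (u i) ^ 2) + Real.sqrt (∑ i, (w i) ^ 2)) ^ 2) :=
        Real.sqrt_le_sqrt hL
    _ = _ := Real.sqrt_sq hb

lemma japR_le_one_add (y : Fin 3 → ℝ) : japR y ≤ 1 + Real.sqrt (∑ i, (y i) ^ 2) := by
  rw [japR]
  have h : (1:ℝ) + ∑ i, (y i)^2 ≤ (1 + Real.sqrt (∑ i, (y i) ^ 2)) ^ 2 := by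
    have := Real.sq_sqrt (sum_sq_nonneg y)
    nlinarith [Real.sqrt_nonneg (∑ i, (y i) ^ 2)]
  calc Real.sqrt (1 + ∑ i, (y i)^2)
      ≤ Real.sqrt ((1 + Real.sqrt (∑ i, (y i) ^ 2)) ^ 2) := Real.sqrt_le_sqrt h
    _ = _ := Real.sqrt_sq (by positivity)

lemma sqrt_sum_sq_le_japR (y : Fin 3 → ℝ) : Real.sqrt (∑ i, (y i) ^ 2) ≤ japR y :=
  Real.sqrt_le_sqrt (by linarith)

/-- The Japanese bracket is 1-Lipschitz w.r.t. Euclidean distance. -/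
lemma japR_lip (y z : Fin 3 → ℝ) :
    |japR y - japR z| ≤ Real.sqrt (∑ i, (y i - z i) ^ 2) := by
  have key : ∀ a b : Fin 3 → ℝ, japR a - japR b ≤ Real.sqrt (∑ i, (a i - b i) ^ 2) := by
    intro a b
    have h := sqrt_sum_sq_add b (fun i => a i - b i)
    simp only [add_sub_cancel] at h
    -- japR a = √(1+Σa²) ≤ √(1+(√Σb²+D)²)? use: Σa² ≤ (√Σb²+D)²  and monotonicity plus
    -- √(1+(s+D)²) ≤ √(1+s²)+D  for s,D ≥ 0.
    set s := Real.sqrt (∑ i, (b i) ^ 2) with hs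
    set D := Real.sqrt (∑ i, (a i - b i) ^ 2) with hD
    have hs0 : 0 ≤ s := Real.sqrt_nonneg _
    have hD0 : 0 ≤ D := Real.sqrt_nonneg _
    have ha2 : (∑ i, (a i) ^ 2) ≤ (s + D) ^ 2 := by
      have h2 : Real.sqrt (∑ i, (a i) ^ 2) ≤ s + D := h
      have h3 := Real.sqrt_nonneg (∑ i, (a i) ^ 2)
      nlinarith [Real.sq_sqrt (sum_sq_nonneg a)]
    have hjb : japR b ^ 2 = 1 + s ^ 2 := by
      rw [japR_sq, hs, Real.sq_sqrt (sum_sq_nonneg b)]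
    have hja : japR a ^ 2 ≤ 1 + (s + D) ^ 2 := by rw [japR_sq]; linarith
    have hsb : s ≤ japR b := by
      have := japR_nonneg b
      nlinarith
    nlinarith [japR_nonneg a, japR_nonneg b]
  rw [abs_sub_le_iff]
  constructor
  · exact key y z
  · have := key z y
    have e : (∑ i, (z i - y i) ^ 2) = ∑ i, (y i - z i) ^ 2 := by
      apply Finset.sum_congr rfl; intro i _; ring
    rwa [e] at this

def cube (x : Fin 3 → ℤ) : Set (Fin 3 → ℝ) := Set.univ.pi fun i => Set.Ico (x i : ℝ) (x i + 1)

lemma cube_mem {x : Fin 3 → ℤ} {y : Fin 3 → ℝ} :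
    y ∈ cube x ↔ ∀ i, (x i : ℝ) ≤ y i ∧ y i < x i + 1 := by
  simp [cube, Set.mem_pi]

lemma cube_volume (x : Fin 3 → ℤ) : volume (cube x) = 1 := by
  rw [cube, volume_pi_pi]
  simp [Real.volume_Ico]

lemma cube_measurable (x : Fin 3 → ℤ) : MeasurableSet (cube x) :=
  MeasurableSet.univ_pi fun i => measurableSet_Ico

lemma card_le_volume (s : Finset (Fin 3 → ℤ)) (Y : Set (Fin 3 → ℝ))
    (h : ∀ x ∈ s, cube x ⊆ Y) : (s.card : ℝ≥0∞) ≤ volume Y := by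
  have hdisj : (↑s : Set (Fin 3 → ℤ)).PairwiseDisjoint cube := by
    intro a _ b _ hab
    rw [Function.onFun, Set.disjoint_left]
    intro y hya hyb
    apply hab
    funext i
    have h1 := (cube_mem.mp hya) i
    have h2 := (cube_mem.mp hyb) i
    have e1 : a i = ⌊y i⌋ := (Int.floor_eq_iff.mpr h1).symm
    have e2 : b i = ⌊y i⌋ := (Int.floor_eq_iff.mpr h2).symm
    rw [e1, e2]
  have hbu := measure_biUnion_finset (μ := volume) hdisj (fun x _ => cube_measurable x)
  have hsub : (⋃ x ∈ s, cube x) ⊆ Y := by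
    intro y hy
    rcases Set.mem_iUnion₂.mp hy with ⟨x, hx, hyx⟩
    exact h x hx hyx
  calc (s.card : ℝ≥0∞) = ∑ x ∈ s, volume (cube x) := by simp [cube_volume]
    _ = volume (⋃ x ∈ s, cube x) := hbu.symm
    _ ≤ volume Y := measure_mono hsub

lemma ann2_vol (u₁ u₂ : ℝ) :
    volume {w : Fin 2 → ℝ | u₁ ≤ ∑ j, (w j) ^ 2 ∧ ∑ j, (w j) ^ 2 ≤ u₂}
      ≤ ENNReal.ofReal (π * (u₂ - u₁)) := by
  set m := max u₁ 0 with hm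
  by_cases hcase : u₂ < m
  · have hempty : {w : Fin 2 → ℝ | u₁ ≤ ∑ j, (w j) ^ 2 ∧ ∑ j, (w j) ^ 2 ≤ u₂} = ∅ := by
      ext w
      simp only [Set.mem_setOf_eq, Set.mem_empty_iff_false, iff_false]
      rintro ⟨h1, h2⟩
      have h3 : (0:ℝ) ≤ ∑ j, (w j) ^ 2 := Finset.sum_nonneg fun _ _ => sq_nonneg _
      have : m ≤ u₂ := le_trans (max_le h1 h3) h2
      linarith
    rw [hempty]; simp
  push_neg at hcase
  have hu₂0 : 0 ≤ u₂ := le_trans (le_max_right _ _) hcase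
  -- transfer to EuclideanSpace
  have hφ := EuclideanSpace.volume_preserving_symm_measurableEquiv_toLp (Fin 2)
  rw [← hφ.measure_preimage_equiv]
  have hset : (MeasurableEquiv.toLp 2 (Fin 2 → ℝ)).symm ⁻¹'
        {w : Fin 2 → ℝ | u₁ ≤ ∑ j, (w j) ^ 2 ∧ ∑ j, (w j) ^ 2 ≤ u₂}
      ⊆ Metric.closedBall (0 : EuclideanSpace ℝ (Fin 2)) (Real.sqrt u₂) \
          Metric.ball 0 (Real.sqrt m) := by
    intro z hz
    have hz' : u₁ ≤ ∑ j, (z j) ^ 2 ∧ ∑ j, (z j) ^ 2 ≤ u₂ := hz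
    have hnorm : ‖z‖ ^ 2 = ∑ j, (z j) ^ 2 := by
      rw [EuclideanSpace.norm_eq]
      rw [Real.sq_sqrt (Finset.sum_nonneg fun _ _ => sq_nonneg _)]
      congr 1; funext j; rw [Real.norm_eq_abs, sq_abs]
    constructor
    · rw [Metric.mem_closedBall, dist_zero_right]
      have : ‖z‖ ^ 2 ≤ u₂ := by rw [hnorm]; exact hz'.2
      calc ‖z‖ = Real.sqrt (‖z‖ ^ 2) := by rw [Real.sqrt_sq (norm_nonneg _)]
        _ ≤ Real.sqrt u₂ := Real.sqrt_le_sqrt this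
    · rw [Metric.mem_ball, dist_zero_right, not_lt]
      have h1 : m ≤ ‖z‖ ^ 2 := by
        rw [hnorm]
        exact max_le hz'.1 (Finset.sum_nonneg fun _ _ => sq_nonneg _)
      calc Real.sqrt m ≤ Real.sqrt (‖z‖ ^ 2) := Real.sqrt_le_sqrt h1
        _ = ‖z‖ := Real.sqrt_sq (norm_nonneg _)
  refine le_trans (measure_mono hset) ?_
  have hsub : Metric.ball (0 : EuclideanSpace ℝ (Fin 2)) (Real.sqrt m)
      ⊆ Metric.closedBall 0 (Real.sqrt u₂) :=
    (Metric.ball_subset_closedBall).trans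
      (Metric.closedBall_subset_closedBall (Real.sqrt_le_sqrt hcase))
  rw [measure_diff hsub measurableSet_ball.nullMeasurableSet measure_ball_lt_top.ne]
  have hvb : volume (Metric.ball (0 : EuclideanSpace ℝ (Fin 2)) (Real.sqrt m))
      = ENNReal.ofReal m * ENNReal.ofReal π := by
    rw [EuclideanSpace.volume_ball]
    simp only [Fintype.card_fin]
    rw [← ENNReal.ofReal_pow (Real.sqrt_nonneg _), Real.sq_sqrt (le_max_right u₁ 0)]
    congr 1
    rw [Real.sq_sqrt Real.pi_nonneg]
    norm_num [Real.Gamma_two]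
  have hvcb : volume (Metric.closedBall (0 : EuclideanSpace ℝ (Fin 2)) (Real.sqrt u₂))
      = ENNReal.ofReal u₂ * ENNReal.ofReal π := by
    rw [EuclideanSpace.volume_closedBall]
    simp only [Fintype.card_fin]
    rw [← ENNReal.ofReal_pow (Real.sqrt_nonneg _), Real.sq_sqrt hu₂0]
    congr 1
    rw [Real.sq_sqrt Real.pi_nonneg]
    norm_num [Real.Gamma_two]
  rw [hvb, hvcb]
  rw [tsub_le_iff_right, ← ENNReal.ofReal_mul hu₂0, ← ENNReal.ofReal_mul (le_max_right u₁ 0),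
    ← ENNReal.ofReal_add (by nlinarith [Real.pi_nonneg, le_max_left u₁ 0] : (0:ℝ) ≤ π * (u₂ - u₁))
      (mul_nonneg (le_max_right u₁ 0) Real.pi_nonneg)]
  apply ENNReal.ofReal_le_ofReal
  have : u₁ ≤ m := le_max_left _ _
  nlinarith [Real.pi_nonneg]

/-- Volume of a shell-slab intersection in ℝ³. -/
lemma volG_pi (v : Fin 3 → ℝ) (hv : 0 < ∑ i, (v i) ^ 2) (s₁ s₂ c₁ c₂ : ℝ) (hs : s₁ ≤ s₂) (hc : c₁ ≤ c₂) :
    volume {y : Fin 3 → ℝ | (s₁ ≤ ∑ i, (y i) ^ 2 ∧ ∑ i, (y i) ^ 2 ≤ s₂) ∧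
        (c₁ ≤ ∑ i, y i * v i ∧ ∑ i, y i * v i ≤ c₂)}
      ≤ ENNReal.ofReal (π * (s₂ - s₁) * ((c₂ - c₁) / Real.sqrt (∑ i, (v i) ^ 2))) := by
  classical
  set dv := Real.sqrt (∑ i, (v i) ^ 2) with hdv
  have hdv0 : 0 < dv := Real.sqrt_pos.mpr hv
  set E := EuclideanSpace ℝ (Fin 3)
  set vE : E := (WithLp.equiv 2 (Fin 3 → ℝ)).symm v with hvE
  have hvE_apply : ∀ i, vE i = v i := fun i => rfl
  have hnormE : ∀ z : E, ‖z‖ ^ 2 = ∑ i, (z i) ^ 2 := by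
    intro z
    rw [EuclideanSpace.norm_eq, Real.sq_sqrt (Finset.sum_nonneg fun _ _ => sq_nonneg _)]
    congr 1; funext i; rw [Real.norm_eq_abs, sq_abs]
  have hnvE : ‖vE‖ = dv := by
    have := hnormE vE
    have h2 : ‖vE‖ ^ 2 = ∑ i, (v i) ^ 2 := this
    rw [hdv, ← h2, Real.sqrt_sq (norm_nonneg _)]
  set u : E := dv⁻¹ • vE with hu
  have hun : ‖u‖ = 1 := by
    rw [hu, norm_smul, hnvE, norm_inv, Real.norm_eq_abs, abs_of_pos hdv0,
      inv_mul_cancel₀ hdv0.ne']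
  -- orthonormal basis with b 0 = u
  have horth : Orthonormal ℝ (Set.restrict ({0} : Set (Fin 3)) (fun _ => u)) := by
    constructor
    · intro i; exact hun
    · intro i j hij
      exfalso
      apply hij
      apply Subtype.ext
      have hi := i.2; have hj := j.2
      simp only [Set.mem_singleton_iff] at hi hj
      rw [hi, hj]
  obtain ⟨b, hb⟩ := Orthonormal.exists_orthonormalBasis_extension_of_card_eq
    (by show Module.finrank ℝ (EuclideanSpace ℝ (Fin 3)) = 3; simp [finrank_euclideanSpace]) horth
  have hb0 : b 0 = u := hb 0 rfl
  -- transfer from pi to E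
  have hφ := EuclideanSpace.volume_preserving_symm_measurableEquiv_toLp (Fin 3)
  rw [← hφ.measure_preimage_equiv]
  -- identify preimage with inner product description
  have hinner : ∀ y : E, (inner ℝ y vE : ℝ) = ∑ i, y i * v i := by
    intro y
    rw [real_inner_comm]
    rw [PiLp.inner_apply]
    apply Finset.sum_congr rfl
    intro i _
    simp [hvE_apply, RCLike.inner_apply]
  have hrepr0 : ∀ y : E, b.repr y 0 = dv⁻¹ * ∑ i, y i * v i := by
    intro y
    rw [OrthonormalBasis.repr_apply_apply, hb0, hu, inner_smul_left]
    have h3 : (inner ℝ vE y : ℝ) = ∑ i, y i * v i := by rw [real_inner_comm]; exact hinner y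
    simp [h3]
  set T : Set E := {z : E | (s₁ ≤ ‖z‖ ^ 2 ∧ ‖z‖ ^ 2 ≤ s₂) ∧
      (c₁ / dv ≤ b.repr z 0 ∧ b.repr z 0 ≤ c₂ / dv)} with hT
  have hTeq : (MeasurableEquiv.toLp 2 (Fin 3 → ℝ)).symm ⁻¹'
      {y : Fin 3 → ℝ | (s₁ ≤ ∑ i, (y i) ^ 2 ∧ ∑ i, (y i) ^ 2 ≤ s₂) ∧
        (c₁ ≤ ∑ i, y i * v i ∧ ∑ i, y i * v i ≤ c₂)} = T := by
    ext z
    simp only [Set.mem_preimage, Set.mem_setOf_eq, hT]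
    have h1 : ∑ i, ((MeasurableEquiv.toLp 2 (Fin 3 → ℝ)).symm z i) ^ 2 = ‖z‖ ^ 2 := by
      rw [hnormE]; rfl
    have h2 : ∑ i, ((MeasurableEquiv.toLp 2 (Fin 3 → ℝ)).symm z i) * v i
        = ∑ i, z i * v i := rfl
    rw [h1, h2, Set.mem_setOf_eq, hrepr0]
    have key1 : ∀ P Q : ℝ, (Q / dv ≤ dv⁻¹ * P ↔ Q ≤ P) := by
      intro P Q; rw [inv_mul_eq_div]; exact div_le_div_iff_of_pos_right hdv0
    have key2 : ∀ P Q : ℝ, (dv⁻¹ * P ≤ Q / dv ↔ P ≤ Q) := by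
      intro P Q; rw [inv_mul_eq_div]; exact div_le_div_iff_of_pos_right hdv0
    rw [key1, key2]
  rw [hTeq]
  -- move to basis coordinates
  set T' : Set (EuclideanSpace ℝ (Fin 3)) := {z | (s₁ ≤ ‖z‖ ^ 2 ∧ ‖z‖ ^ 2 ≤ s₂) ∧
      z 0 ∈ Set.Icc (c₁ / dv) (c₂ / dv)} with hT'
  have hT'meas : MeasurableSet T' := by
    have h1 : Continuous fun z : EuclideanSpace ℝ (Fin 3) => ‖z‖ ^ 2 :=
      (continuous_norm).pow 2
    have h2 : Continuous fun z : EuclideanSpace ℝ (Fin 3) => z 0 :=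
      (continuous_apply (0 : Fin 3)).comp (PiLp.continuous_ofLp 2 _)
    have : T' = ((fun z : EuclideanSpace ℝ (Fin 3) => ‖z‖ ^ 2) ⁻¹' Set.Icc s₁ s₂) ∩
        ((fun z : EuclideanSpace ℝ (Fin 3) => z 0) ⁻¹' Set.Icc (c₁ / dv) (c₂ / dv)) := by
      ext z; simp [hT', Set.mem_Icc, and_assoc]
    rw [this]
    exact (h1.measurable measurableSet_Icc).inter (h2.measurable measurableSet_Icc)
  have hTT' : T = ⇑b.repr ⁻¹' T' := by
    ext z
    simp only [hT, hT', Set.mem_setOf_eq, Set.mem_preimage, Set.mem_Icc,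
      b.repr.norm_map]
  rw [hTT', (b.measurePreserving_repr).measure_preimage hT'meas.nullMeasurableSet]
  -- back to pi coordinates
  set T₂ : Set (Fin 3 → ℝ) := {w | (s₁ ≤ ∑ i, (w i) ^ 2 ∧ ∑ i, (w i) ^ 2 ≤ s₂) ∧
      w 0 ∈ Set.Icc (c₁ / dv) (c₂ / dv)} with hT₂
  have hT'T₂ : T' = (MeasurableEquiv.toLp 2 (Fin 3 → ℝ)).symm ⁻¹' T₂ := by
    ext z
    simp only [hT', hT₂, Set.mem_setOf_eq, Set.mem_preimage]
    have h1 : ∑ i, ((MeasurableEquiv.toLp 2 (Fin 3 → ℝ)).symm z i) ^ 2 = ‖z‖ ^ 2 := by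
      rw [hnormE]; rfl
    rw [h1]
    rfl
  rw [hT'T₂, hφ.measure_preimage_equiv]
  -- split off the first coordinate
  set ψ := MeasurableEquiv.piFinSuccAbove (fun _ : Fin 3 => ℝ) 0 with hψdef
  have hψ := volume_preserving_piFinSuccAbove (fun _ : Fin 3 => ℝ) 0
  set T₃ : Set (ℝ × (Fin 2 → ℝ)) := {p | (s₁ ≤ p.1 ^ 2 + ∑ j, (p.2 j) ^ 2 ∧
      p.1 ^ 2 + ∑ j, (p.2 j) ^ 2 ≤ s₂) ∧ p.1 ∈ Set.Icc (c₁ / dv) (c₂ / dv)} with hT₃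
  have hT₂T₃ : T₂ = ψ ⁻¹' T₃ := by
    ext w
    simp only [hT₂, hT₃, Set.mem_setOf_eq, Set.mem_preimage, hψdef,
      MeasurableEquiv.piFinSuccAbove_apply, Fin.insertNthEquiv, Equiv.coe_fn_symm_mk, Fin.removeNth]
    have hsum : ∑ i, (w i) ^ 2
        = w 0 ^ 2 + ∑ j, (w ((0 : Fin 3).succAbove j)) ^ 2 :=
      Fin.sum_univ_succAbove (fun i => w i ^ 2) 0
    rw [hsum]
  rw [hT₂T₃, hψ.measure_preimage_equiv]
  have hT₃meas : MeasurableSet T₃ := by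
    have h1 : Continuous fun p : ℝ × (Fin 2 → ℝ) => p.1 ^ 2 + ∑ j, (p.2 j) ^ 2 := by
      apply Continuous.add
      · exact (continuous_fst).pow 2
      · apply continuous_finset_sum
        intro j _
        exact ((continuous_apply j).comp continuous_snd).pow 2
    have h2 : Continuous fun p : ℝ × (Fin 2 → ℝ) => p.1 := continuous_fst
    have : T₃ = ((fun p : ℝ × (Fin 2 → ℝ) => p.1 ^ 2 + ∑ j, (p.2 j) ^ 2) ⁻¹'
          Set.Icc s₁ s₂) ∩
        ((fun p : ℝ × (Fin 2 → ℝ) => p.1) ⁻¹' Set.Icc (c₁ / dv) (c₂ / dv)) := by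
      ext p; simp [hT₃, Set.mem_Icc, and_assoc]
    rw [this]
    exact (h1.measurable measurableSet_Icc).inter (h2.measurable measurableSet_Icc)
  rw [MeasureTheory.Measure.volume_eq_prod, MeasureTheory.Measure.prod_apply hT₃meas]
  have hsec : ∀ t : ℝ, volume (Prod.mk t ⁻¹' T₃) ≤
      (Set.Icc (c₁ / dv) (c₂ / dv)).indicator
        (fun _ => ENNReal.ofReal (π * (s₂ - s₁))) t := by
    intro t
    by_cases ht : t ∈ Set.Icc (c₁ / dv) (c₂ / dv)
    · rw [Set.indicator_of_mem ht]
      have hsub : Prod.mk t ⁻¹' T₃ ⊆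
          {w : Fin 2 → ℝ | s₁ - t ^ 2 ≤ ∑ j, (w j) ^ 2 ∧ ∑ j, (w j) ^ 2 ≤ s₂ - t ^ 2} := by
        intro w hw
        have hw' : (s₁ ≤ t ^ 2 + ∑ j, (w j) ^ 2 ∧ t ^ 2 + ∑ j, (w j) ^ 2 ≤ s₂) ∧
            t ∈ Set.Icc (c₁ / dv) (c₂ / dv) := hw
        constructor <;> [linarith [hw'.1.1]; linarith [hw'.1.2]]
      refine le_trans (measure_mono hsub) (le_trans (ann2_vol _ _) ?_)
      apply le_of_eq
      congr 1
      ring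
    · rw [Set.indicator_of_notMem ht]
      have : Prod.mk t ⁻¹' T₃ = ∅ := by
        ext w
        simp only [Set.mem_preimage, hT₃, Set.mem_setOf_eq, Set.mem_empty_iff_false,
          iff_false]
        rintro ⟨-, hmem⟩
        exact ht hmem
      rw [this]
      simp
  calc ∫⁻ t, volume (Prod.mk t ⁻¹' T₃)
      ≤ ∫⁻ t, (Set.Icc (c₁ / dv) (c₂ / dv)).indicator
          (fun _ => ENNReal.ofReal (π * (s₂ - s₁))) t := lintegral_mono hsec
    _ = ENNReal.ofReal (π * (s₂ - s₁)) * volume (Set.Icc (c₁ / dv) (c₂ / dv)) := by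
        rw [lintegral_indicator measurableSet_Icc, setLIntegral_const]
    _ ≤ ENNReal.ofReal (π * (s₂ - s₁) * ((c₂ - c₁) / dv)) := by
        rw [Real.volume_Icc]
        rw [← ENNReal.ofReal_mul (mul_nonneg Real.pi_nonneg (by linarith) : (0:ℝ) ≤ π * (s₂ - s₁))]
        apply ENNReal.ofReal_le_ofReal
        apply le_of_eq
        rw [div_sub_div_same]

/-- The box of lattice points with `jap x ≤ 2N`. -/
def boxZ (N : ℝ) : Finset (Fin 3 → ℤ) :=
  Fintype.piFinset fun _ => Finset.Icc (-⌊2 * N⌋) ⌊2 * N⌋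

lemma mem_boxZ {N : ℝ} (h1 : 0 ≤ N) {x : Fin 3 → ℤ} (hx : jap x ≤ 2 * N) : x ∈ boxZ N := by
  rw [boxZ, Fintype.mem_piFinset]
  intro i
  have hsum : 1 + ∑ j, ((x j : ℝ)) ^ 2 ≤ (2 * N) ^ 2 := by
    have h0 : 0 ≤ 1 + ∑ j, ((x j : ℝ)) ^ 2 := by
      have := sum_sq_nonneg (fun j => (x j : ℝ)); linarith
    have := Real.sq_sqrt h0
    rw [jap] at hx
    nlinarith [Real.sqrt_nonneg (1 + ∑ j, ((x j : ℝ)) ^ 2)]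
  have hxi : ((x i : ℝ)) ^ 2 ≤ (2 * N) ^ 2 := by
    have hle : ((x i : ℝ)) ^ 2 ≤ ∑ j, ((x j : ℝ)) ^ 2 :=
      Finset.single_le_sum (f := fun j => ((x j : ℝ)) ^ 2) (fun j _ => sq_nonneg _)
        (Finset.mem_univ i)
    linarith
  have habs : |(x i : ℝ)| ≤ 2 * N := by
    have h2N : 0 ≤ 2 * N := by linarith
    nlinarith [abs_nonneg (x i : ℝ), sq_abs (x i : ℝ)]
  rw [Finset.mem_Icc]
  constructor
  · rw [← neg_le]
    rw [Int.le_floor]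
    push_cast
    have := neg_abs_le (x i : ℝ)
    linarith [abs_le.mp habs]
  · rw [Int.le_floor]
    exact le_trans (le_abs_self _) habs

lemma card_boxZ {N : ℝ} (h1 : 1 ≤ N) : (((boxZ N).card : ℝ)) ≤ 125 * N ^ 3 := by
  rw [boxZ, Fintype.card_piFinset]
  have hcard : (Finset.Icc (-⌊2 * N⌋) ⌊2 * N⌋).card = (2 * ⌊2 * N⌋ + 1).toNat := by
    rw [Int.card_Icc]; congr 1; ring
  have hfl : (0:ℤ) ≤ ⌊2 * N⌋ := Int.floor_nonneg.mpr (by linarith)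
  have hcastle : (((2 * ⌊2 * N⌋ + 1).toNat : ℝ)) ≤ 5 * N := by
    have hnn : (0:ℤ) ≤ 2 * ⌊2 * N⌋ + 1 := by omega
    rw [show (((2 * ⌊2 * N⌋ + 1).toNat : ℝ)) = ((2 * ⌊2 * N⌋ + 1 : ℤ) : ℝ) from by
      exact_mod_cast Int.toNat_of_nonneg hnn]
    push_cast
    have := Int.floor_le (2 * N)
    linarith
  simp only [hcard]
  rw [Finset.prod_const, Finset.card_univ, Fintype.card_fin]
  calc (((2 * ⌊2 * N⌋ + 1).toNat ^ 3 : ℕ) : ℝ)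
      = (((2 * ⌊2 * N⌋ + 1).toNat : ℝ)) ^ 3 := by push_cast; ring
    _ ≤ (5 * N) ^ 3 := by
        apply pow_le_pow_left₀ (by positivity) hcastle 3
    _ = 125 * N ^ 3 := by ring


lemma card_cover_le {α : Type*} (F : Finset α) (t : Finset ℕ) (K : ℕ → Finset α)
    (g : α → ℕ) (h1 : ∀ x ∈ F, g x ∈ t) (h2 : ∀ x ∈ F, x ∈ K (g x)) :
    F.card ≤ ∑ a ∈ t, (K a).card := by
  classical
  calc F.card ≤ (t.biUnion K).card :=
        Finset.card_le_card (fun x hx => Finset.mem_biUnion.mpr ⟨g x, h1 x hx, h2 x hx⟩)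
    _ ≤ ∑ a ∈ t, (K a).card := Finset.card_biUnion_le

set_option maxHeartbeats 1000000 in
lemma perq (N₁₂ N₂ : ℝ) (h1 : 1 ≤ N₁₂) (h2 : 1 ≤ N₂) (ε₁ ε₂ : ℝ)
    (hε₁ : IsSign ε₁) (hε₂ : IsSign ε₂) (σ : ℝ) (q : Fin 3 → ℤ) (hq : N₁₂ ≤ jap q) :
    ((({x : Fin 3 → ℤ | jap x ≤ 2 * N₂ ∧
        |ε₁ * jap (q - x) + ε₂ * jap x - σ| ≤ 1}).ncard : ℝ))
      ≤ 1000000 * N₂ ^ 3 / min N₁₂ N₂ := by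
  classical
  set X := {x : Fin 3 → ℤ | jap x ≤ 2 * N₂ ∧ |ε₁ * jap (q - x) + ε₂ * jap x - σ| ≤ 1} with hX
  have hXsub : X ⊆ ↑(boxZ N₂) := fun x hx => mem_boxZ (by linarith) hx.1
  have hXfin : X.Finite := Set.Finite.subset (boxZ N₂).finite_toSet hXsub
  set md := min N₁₂ N₂ with hmd
  have hmd1 : 1 ≤ md := le_min h1 h2
  have hmd0 : 0 < md := by linarith
  have hmdN₂ : md ≤ N₂ := min_le_right _ _
  have hmdN₁₂ : md ≤ N₁₂ := min_le_left _ _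
  have hN₂0 : (0:ℝ) < N₂ := by linarith
  have htrivial : (X.ncard : ℝ) ≤ 125 * N₂ ^ 3 := by
    have hle := Set.ncard_le_ncard hXsub (boxZ N₂).finite_toSet
    rw [Set.ncard_coe_finset] at hle
    calc (X.ncard : ℝ) ≤ ((boxZ N₂).card : ℝ) := by exact_mod_cast hle
      _ ≤ 125 * N₂ ^ 3 := card_boxZ h2
  by_cases hsmall : md ≤ 8000
  · rw [le_div_iff₀ hmd0]
    have hN3 : (0:ℝ) ≤ N₂ ^ 3 := by positivity
    nlinarith only [htrivial, hsmall, hmd0, hN3,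
      (show (0:ℝ) ≤ (X.ncard:ℝ) from Nat.cast_nonneg _)]
  push_neg at hsmall
  have hN₂big : (8000:ℝ) < N₂ := lt_of_lt_of_le hsmall hmdN₂
  have hN₁₂big : (8000:ℝ) < N₁₂ := lt_of_lt_of_le hsmall hmdN₁₂
  set qR : Fin 3 → ℝ := fun i => (q i : ℝ) with hqR
  set d := Real.sqrt (∑ i, (qR i) ^ 2) with hd
  have hjapq : jap q = japR qR := jap_eq_japR q
  have hsqlow : N₁₂ ^ 2 - 1 ≤ ∑ i, (qR i) ^ 2 := by
    have hj := japR_sq qR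
    have h3 : N₁₂ ≤ japR qR := by rw [← hjapq]; exact hq
    nlinarith only [hj, h3, japR_nonneg qR, h1]
  have hqpos : 0 < ∑ i, (qR i) ^ 2 := by nlinarith only [hsqlow, hN₁₂big]
  have hd0 : 0 < d := Real.sqrt_pos.mpr hqpos
  have hd2 : d ^ 2 = ∑ i, (qR i) ^ 2 := Real.sq_sqrt (le_of_lt hqpos)
  have hdN : N₁₂ / 2 ≤ d := by nlinarith only [hsqlow, hd2, hd0, hN₁₂big]
  set R := 2 * N₂ + 2 with hR
  have hR0 : (0:ℝ) < R := by linarith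
  have habs₁ : |ε₁| = 1 := by rcases hε₁ with h | h <;> rw [h] <;> norm_num
  have habs₂ : |ε₂| = 1 := by rcases hε₂ with h | h <;> rw [h] <;> norm_num
  have hsq₁ : ε₁ * ε₁ = 1 := by rcases hε₁ with h | h <;> rw [h] <;> norm_num
  -- fiberwise decomposition over the value of the integer square root
  have hncard : X.ncard = hXfin.toFinset.card := Set.ncard_eq_toFinset_card X hXfin
  set F := hXfin.toFinset with hF
  set M := ⌊2 * N₂⌋₊ with hM
  set g : (Fin 3 → ℤ) → ℕ := fun x => Nat.sqrt (1 + ∑ i, (x i) ^ 2).toNat with hg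
  set Fa : ℕ → Finset (Fin 3 → ℤ) :=
    fun a => @Finset.filter _ (fun x => g x = a) (fun _ => Classical.propDecidable _) F with hFa
  have hgwin : ∀ x : Fin 3 → ℤ, ((g x : ℝ) ≤ jap x ∧ jap x < (g x : ℝ) + 1) := by
    intro x
    set n := (1 + ∑ i, (x i) ^ 2).toNat with hn
    have hnn : (0:ℤ) ≤ 1 + ∑ i, (x i) ^ 2 := by positivity
    have hncast : ((n:ℤ)) = 1 + ∑ i, (x i) ^ 2 := Int.toNat_of_nonneg hnn
    have hjap : jap x = Real.sqrt ((n:ℝ)) := by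
      rw [jap]
      congr 1
      have h0 : ((n:ℝ)) = (((n:ℤ) : ℤ) : ℝ) := by push_cast; ring
      rw [h0, hncast]
      push_cast; ring
    have hh1 : (g x) ^ 2 ≤ n := Nat.sqrt_le' n
    have hh2 : n < (g x).succ ^ 2 := Nat.lt_succ_sqrt' n
    constructor
    · rw [hjap]
      have hcast : ((g x : ℝ)) ^ 2 ≤ (n:ℝ) := by exact_mod_cast hh1
      have hgx0 : (0:ℝ) ≤ ((g x : ℝ)) := Nat.cast_nonneg _
      calc ((g x : ℝ)) = Real.sqrt (((g x : ℝ)) ^ 2) := (Real.sqrt_sq hgx0).symm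
        _ ≤ Real.sqrt (n:ℝ) := Real.sqrt_le_sqrt hcast
    · rw [hjap]
      have hcast : (n:ℝ) < ((g x : ℝ) + 1) ^ 2 := by exact_mod_cast hh2
      by_contra hcon
      push_neg at hcon
      have hs := Real.sq_sqrt (show (0:ℝ) ≤ (n:ℝ) from Nat.cast_nonneg _)
      nlinarith only [hcast, hcon, hs, Real.sqrt_nonneg ((n:ℝ))]
  have hmemX : ∀ x ∈ F, x ∈ X := fun x hx => hXfin.mem_toFinset.mp hx
  have hmem : ∀ x ∈ F, g x ∈ Finset.Icc 1 M := by
    intro x hxF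
    have hx : x ∈ X := hmemX x hxF
    have hwin := hgwin x
    have hjx : (1:ℝ) ≤ jap x := by
      rw [jap_eq_japR]; exact one_le_japR _
    rw [Finset.mem_Icc]
    constructor
    · by_contra hcon
      push_neg at hcon
      have hz : g x = 0 := by omega
      rw [hz] at hwin
      push_cast at hwin
      linarith [hwin.2]
    · apply Nat.le_floor
      calc ((g x : ℝ)) ≤ jap x := hwin.1
        _ ≤ 2 * N₂ := hx.1
  -- the per-fiber volume bound
  have hfiber : ∀ a ∈ Finset.Icc 1 M,
      (((Fa a).card : ℝ))
        ≤ π * (10 * (a:ℝ) + 5) * ((6 * (a:ℝ) + 16 * d + 16 * R + 89) / d) := by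
    intro a haI
    have ha1 : 1 ≤ a := (Finset.mem_Icc.mp haI).1
    have ha1R : (1:ℝ) ≤ (a:ℝ) := by exact_mod_cast ha1
    set s₁ : ℝ := (max ((a:ℝ) - 2) 1) ^ 2 - 1 with hs₁
    set s₂ : ℝ := ((a:ℝ) + 3) ^ 2 - 1 with hs₂
    set β : ℝ := ε₁ * σ - ε₁ * ε₂ * (a:ℝ) with hβ
    set c₀ : ℝ := (d ^ 2 + (a:ℝ) ^ 2 - β ^ 2) / 2 with hc₀
    set L : ℝ := (6 * (a:ℝ) + 16 * d + 16 * R + 89) / 2 with hL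
    have hL0 : 0 ≤ L := by
      rw [hL]
      have : (0:ℝ) ≤ (a:ℝ) := Nat.cast_nonneg _
      linarith [hd0, hR0]
    set c₁ : ℝ := c₀ - L with hc₁
    set c₂ : ℝ := c₀ + L with hc₂
    have hmax1 : (1:ℝ) ≤ max ((a:ℝ) - 2) 1 := le_max_right _ _
    have hmaxle : max ((a:ℝ) - 2) 1 ≤ (a:ℝ) + 3 := by
      apply max_le <;> linarith
    have hs : s₁ ≤ s₂ := by
      rw [hs₁, hs₂]
      have := pow_le_pow_left₀ (by linarith : (0:ℝ) ≤ max ((a:ℝ) - 2) 1) hmaxle 2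
      linarith
    have hc : c₁ ≤ c₂ := by rw [hc₁, hc₂]; linarith
    set Gset : Set (Fin 3 → ℝ) := {y : Fin 3 → ℝ |
        (s₁ ≤ ∑ i, (y i) ^ 2 ∧ ∑ i, (y i) ^ 2 ≤ s₂) ∧
        (c₁ ≤ ∑ i, y i * qR i ∧ ∑ i, y i * qR i ≤ c₂)} with hG
    -- cubes over fiber points are contained in Gset
    have hcube : ∀ x ∈ Fa a, cube x ⊆ Gset := by
      intro x hxf y hy
      have hxf' := (@Finset.mem_filter _ (fun x => g x = a)
        (fun _ => Classical.propDecidable _) F x).mp hxf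
      have hx : x ∈ X := hmemX x hxf'.1
      have hfl : g x = a := hxf'.2
      set xR : Fin 3 → ℝ := fun i => (x i : ℝ) with hxR
      have hyx : ∑ i, (y i - xR i) ^ 2 ≤ 3 := by
        have hbd : ∀ i, (y i - xR i) ^ 2 ≤ 1 := by
          intro i
          have hcm := (cube_mem.mp hy) i
          nlinarith only [hcm.1, hcm.2]
        have hsum3 : ∑ i, (y i - xR i) ^ 2 ≤ ∑ _i : Fin 3, (1:ℝ) :=
          Finset.sum_le_sum fun i _ => hbd i
        have he : ∑ _i : Fin 3, (1:ℝ) = 3 := by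
          rw [Finset.sum_const, Finset.card_univ, Fintype.card_fin]; norm_num
        linarith only [hsum3, he.le, he.ge]
      have hsqrt3 : Real.sqrt (∑ i, (y i - xR i) ^ 2) ≤ 2 := by
        have h4 : Real.sqrt (∑ i, (y i - xR i) ^ 2) ≤ Real.sqrt 4 :=
          Real.sqrt_le_sqrt (by linarith only [hyx])
        rwa [show (4:ℝ) = 2 ^ 2 by norm_num, Real.sqrt_sq (by norm_num : (0:ℝ) ≤ 2)] at h4
      set A := japR y with hA
      set Ax := japR xR with hAx
      have hjapx : jap x = Ax := jap_eq_japR x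
      have hdiffA : |A - Ax| ≤ 2 := le_trans (japR_lip y xR) hsqrt3
      set By := japR (fun i => qR i - y i) with hBy
      set Bx := japR (fun i => qR i - xR i) with hBx
      have hjapqx : jap (q - x) = Bx := by
        rw [jap_eq_japR]
        congr 1
        funext i
        simp [hqR, hxR]
      have hdiffB : |By - Bx| ≤ 2 := by
        have h5 := japR_lip (fun i => qR i - y i) (fun i => qR i - xR i)
        have h6 : (∑ i, ((qR i - y i) - (qR i - xR i)) ^ 2) = ∑ i, (y i - xR i) ^ 2 := by
          apply Finset.sum_congr rfl; intro i _; ring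
        rw [h6] at h5
        exact le_trans h5 hsqrt3
      have hAxwin : (a:ℝ) ≤ Ax ∧ Ax < (a:ℝ) + 1 := by
        have h := hgwin x
        rw [hfl, hjapx] at h
        exact h
      have habsA := abs_le.mp hdiffA
      have hAwin : (a:ℝ) - 2 ≤ A ∧ A ≤ (a:ℝ) + 3 := by
        constructor
        · linarith only [hAxwin.1, habsA.1]
        · linarith only [hAxwin.2, habsA.2]
      have hA1 : 1 ≤ A := one_le_japR y
      have hAR : A ≤ R := by
        have hxx : Ax ≤ 2 * N₂ := by rw [← hjapx]; exact hx.1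
        rw [hR]; linarith only [hxx, habsA.2]
      have hphx : |ε₁ * Bx + ε₂ * Ax - σ| ≤ 1 := by
        have hph := hx.2
        rwa [hjapqx, hjapx] at hph
      have habsB := abs_le.mp hdiffB
      have hphase : |ε₁ * By + ε₂ * A - σ| ≤ 5 := by
        have hident : ε₁ * By + ε₂ * A - σ
            = (ε₁ * Bx + ε₂ * Ax - σ) + ε₁ * (By - Bx) + ε₂ * (A - Ax) := by ring
        calc |ε₁ * By + ε₂ * A - σ|
            ≤ |(ε₁ * Bx + ε₂ * Ax - σ) + ε₁ * (By - Bx)| + |ε₂ * (A - Ax)| := by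
              rw [hident]; exact abs_add_le _ _
          _ ≤ |ε₁ * Bx + ε₂ * Ax - σ| + |ε₁ * (By - Bx)| + |ε₂ * (A - Ax)| := by
              have := abs_add_le (ε₁ * Bx + ε₂ * Ax - σ) (ε₁ * (By - Bx))
              linarith only [this]
          _ ≤ 1 + 2 + 2 := by
              rw [abs_mul, abs_mul, habs₁, habs₂]
              simp only [one_mul]
              have h7 : |By - Bx| ≤ 2 := hdiffB
              have h8 : |A - Ax| ≤ 2 := hdiffA
              linarith only [hphx, h7, h8]
          _ = 5 := by norm_num
      have hAa : |A - (a:ℝ)| ≤ 3 := by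
        rw [abs_le]
        constructor
        · linarith only [hAwin.1]
        · linarith only [hAwin.2]
      have hBβ : |By - β| ≤ 8 := by
        have hident : By - β = ε₁ * (ε₁ * By + ε₂ * A - σ) - ε₁ * ε₂ * (A - (a:ℝ)) := by
          rw [hβ]; linear_combination (-By) * hsq₁
        calc |By - β| ≤ |ε₁ * (ε₁ * By + ε₂ * A - σ)| + |ε₁ * ε₂ * (A - (a:ℝ))| := by
              rw [hident]; exact abs_sub _ _
          _ ≤ 5 + 3 := by
              rw [abs_mul, abs_mul, abs_mul, habs₁, habs₂]
              simp only [one_mul]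
              have := abs_nonneg (A - (a:ℝ))
              linarith only [hphase, hAa, this]
          _ = 8 := by norm_num
      have hB1 : 1 ≤ By := one_le_japR _
      have hBup : By ≤ 1 + d + R := by
        have h9 : By ≤ 1 + Real.sqrt (∑ i, (qR i - y i) ^ 2) := japR_le_one_add _
        have h10 : Real.sqrt (∑ i, (qR i - y i) ^ 2)
            ≤ Real.sqrt (∑ i, (qR i) ^ 2) + Real.sqrt (∑ i, (y i) ^ 2) := by
          have h11 := sqrt_sum_sq_add qR (fun i => -(y i))
          have e1 : (∑ i, (qR i + -(y i)) ^ 2) = ∑ i, (qR i - y i) ^ 2 := by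
            apply Finset.sum_congr rfl; intro i _; ring
          have e2 : (∑ i, (-(y i)) ^ 2) = ∑ i, (y i) ^ 2 := by
            apply Finset.sum_congr rfl; intro i _; ring
          rwa [e1, e2] at h11
        have h12 : Real.sqrt (∑ i, (y i) ^ 2) ≤ A := sqrt_sum_sq_le_japR y
        rw [← hd] at h10
        linarith only [h9, h10, h12, hAR]
      have habsBβ := abs_le.mp hBβ
      have hβabs : |β| ≤ By + 8 := by
        rw [abs_le]
        constructor
        · linarith only [habsBβ.2, hB1]
        · linarith only [habsBβ.1, hB1]
      have hA2 : A ^ 2 = 1 + ∑ i, (y i) ^ 2 := japR_sq y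
      have hB2 : By ^ 2 = 1 + ∑ i, (qR i - y i) ^ 2 := japR_sq _
      have hexp : ∑ i, (qR i - y i) ^ 2
          = (∑ i, (qR i) ^ 2) - 2 * (∑ i, y i * qR i) + ∑ i, (y i) ^ 2 := by
        simp only [Fin.sum_univ_three]
        ring
      have h2yq : 2 * (∑ i, y i * qR i) = d ^ 2 + A ^ 2 - By ^ 2 := by
        rw [hd2]
        linarith only [hA2, hB2, hexp]
      have hAa2 : |A ^ 2 - (a:ℝ) ^ 2| ≤ 6 * (a:ℝ) + 9 := by
        rw [abs_le]
        constructor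
        · nlinarith only [hAwin.1, hA1, ha1R]
        · nlinarith only [hAwin.2, hA1, ha1R]
      have hBβ2 : |By ^ 2 - β ^ 2| ≤ 16 * (1 + d + R) + 64 := by
        have e3 : By ^ 2 - β ^ 2 = (By - β) * (By + β) := by ring
        rw [e3, abs_mul]
        have habsβ := abs_le.mp hβabs
        have h13 : |By + β| ≤ 2 * By + 8 := by
          rw [abs_le]
          constructor
          · linarith only [habsβ.1, hB1]
          · linarith only [habsβ.2, hB1]
        calc |By - β| * |By + β| ≤ 8 * (2 * By + 8) := by
              apply mul_le_mul hBβ h13 (abs_nonneg _) (by norm_num)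
          _ ≤ 16 * (1 + d + R) + 64 := by linarith only [hBup]
      have hwin : |(∑ i, y i * qR i) - c₀| ≤ L := by
        have e4 : 2 * ((∑ i, y i * qR i) - c₀) = (A ^ 2 - (a:ℝ) ^ 2) - (By ^ 2 - β ^ 2) := by
          rw [hc₀]; linarith only [h2yq]
        have h15 : |2 * ((∑ i, y i * qR i) - c₀)|
            ≤ (6 * (a:ℝ) + 9) + (16 * (1 + d + R) + 64) := by
          rw [e4]
          exact le_trans (abs_sub _ _) (add_le_add hAa2 hBβ2)
        rw [abs_mul] at h15
        have h16 : |(2:ℝ)| = 2 := by norm_num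
        rw [h16] at h15
        rw [hL]
        linarith [h15]
      have habswin := abs_le.mp hwin
      refine ⟨⟨?_, ?_⟩, ?_, ?_⟩
      · rw [hs₁]
        have h16 : max ((a:ℝ) - 2) 1 ≤ A := max_le hAwin.1 hA1
        have h17 := pow_le_pow_left₀ (by linarith only [hmax1] : (0:ℝ) ≤ max ((a:ℝ) - 2) 1) h16 2
        linarith only [h17, hA2.le, hA2.ge]
      · rw [hs₂]
        have h17 := pow_le_pow_left₀ (by linarith only [hA1] : (0:ℝ) ≤ A) hAwin.2 2
        linarith only [h17, hA2.le, hA2.ge]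
      · rw [hc₁]; linarith only [habswin.1]
      · rw [hc₂]; linarith only [habswin.2]
    -- volume bound
    have hQ := card_le_volume (Fa a) Gset hcube
    have hV := volG_pi qR hqpos s₁ s₂ c₁ c₂ hs hc
    rw [← hd] at hV
    have hEN : (((Fa a).card : ℝ≥0∞))
        ≤ ENNReal.ofReal (π * (s₂ - s₁) * ((c₂ - c₁) / d)) :=
      le_trans hQ (by rw [hG]; exact hV)
    have hrb0 : (0:ℝ) ≤ π * (s₂ - s₁) * ((c₂ - c₁) / d) := by
      apply mul_nonneg (mul_nonneg Real.pi_nonneg (by linarith only [hs]))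
      apply div_nonneg (by linarith only [hc]) (le_of_lt hd0)
    have hreal : (((Fa a).card : ℝ)) ≤ π * (s₂ - s₁) * ((c₂ - c₁) / d) := by
      rw [← ENNReal.ofReal_le_ofReal_iff hrb0]
      rwa [ENNReal.ofReal_natCast]
    refine le_trans hreal ?_
    have hs21 : s₂ - s₁ ≤ 10 * (a:ℝ) + 5 := by
      rw [hs₁, hs₂]
      rcases le_total ((a:ℝ) - 2) 1 with hcase | hcase
      · rw [max_eq_right hcase]
        nlinarith only [ha1R, hcase]
      · rw [max_eq_left hcase]
        nlinarith only [ha1R, hcase]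
    have hc21 : c₂ - c₁ = 6 * (a:ℝ) + 16 * d + 16 * R + 89 := by
      rw [hc₁, hc₂, hL]; ring
    rw [hc21]
    apply mul_le_mul_of_nonneg_right (mul_le_mul_of_nonneg_left hs21 Real.pi_nonneg)
    apply div_nonneg ?_ (le_of_lt hd0)
    have : (0:ℝ) ≤ (a:ℝ) := Nat.cast_nonneg _
    linarith only [this, hd0, hR0]
  -- uniform bound over the fibers and summation
  have hMle : ((M:ℝ)) ≤ 2 * N₂ := by
    rw [hM]
    exact Nat.floor_le (by linarith)
  set U : ℝ := π * (20 * N₂ + 5) * ((12 * N₂ + 16 * d + 16 * R + 89) / d) with hU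
  have hU0 : 0 ≤ U := by
    rw [hU]
    apply mul_nonneg (mul_nonneg Real.pi_nonneg (by linarith only [hN₂0]))
    apply div_nonneg ?_ (le_of_lt hd0)
    linarith only [hN₂0, hd0, hR0]
  have hunif : ∀ a ∈ Finset.Icc 1 M,
      π * (10 * (a:ℝ) + 5) * ((6 * (a:ℝ) + 16 * d + 16 * R + 89) / d) ≤ U := by
    intro a haI
    have haM : a ≤ M := (Finset.mem_Icc.mp haI).2
    have haN : (a:ℝ) ≤ 2 * N₂ := by
      calc (a:ℝ) ≤ (M:ℝ) := by exact_mod_cast haM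
        _ ≤ 2 * N₂ := hMle
    have ha0 : (0:ℝ) ≤ (a:ℝ) := Nat.cast_nonneg _
    rw [hU]
    have hnum : 6 * (a:ℝ) + 16 * d + 16 * R + 89 ≤ 12 * N₂ + 16 * d + 16 * R + 89 := by
      linarith only [haN]
    apply mul_le_mul
    · apply mul_le_mul_of_nonneg_left (by linarith only [haN]) Real.pi_nonneg
    · exact (div_le_div_iff_of_pos_right hd0).mpr hnum
    · apply div_nonneg ?_ (le_of_lt hd0)
      linarith only [ha0, hd0, hR0]
    · apply mul_nonneg Real.pi_nonneg
      linarith only [hN₂0]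
  have hcover : F.card ≤ ∑ a ∈ Finset.Icc 1 M, (Fa a).card := by
    apply card_cover_le F (Finset.Icc 1 M) Fa g hmem
    intro x hx
    rw [hFa]
    exact (@Finset.mem_filter _ (fun z => g z = g x)
      (fun _ => Classical.propDecidable _) F x).mpr ⟨hx, rfl⟩
  have hsumR : ((F.card : ℝ)) ≤ ∑ a ∈ Finset.Icc 1 M, (((Fa a).card : ℝ)) := by
    have := hcover
    calc ((F.card : ℝ)) ≤ ((∑ a ∈ Finset.Icc 1 M, (Fa a).card : ℕ) : ℝ) := by
          exact_mod_cast this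
      _ = ∑ a ∈ Finset.Icc 1 M, (((Fa a).card : ℝ)) := by push_cast; rfl
  have hsumU : ∑ a ∈ Finset.Icc 1 M, (((Fa a).card : ℝ)) ≤ (M:ℝ) * U := by
    calc ∑ a ∈ Finset.Icc 1 M, (((Fa a).card : ℝ))
        ≤ ∑ _a ∈ Finset.Icc 1 M, U :=
          Finset.sum_le_sum (fun a ha => le_trans (hfiber a ha) (hunif a ha))
      _ = ((Finset.Icc 1 M).card : ℝ) * U := by
          rw [Finset.sum_const, nsmul_eq_mul]
      _ = (M:ℝ) * U := by
          congr 1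
          rw [Nat.card_Icc]
          norm_num
  -- final numeric estimate
  have hmd2d : md ≤ 2 * d := by linarith only [hmdN₁₂, hdN]
  have hπ4 : π ≤ 4 := Real.pi_le_four
  have hfinal : (2 * N₂) * U ≤ 1000000 * N₂ ^ 3 / md := by
    have hUeq : (2 * N₂) * U
        = (2 * N₂ * (π * (20 * N₂ + 5)) * (12 * N₂ + 16 * d + 16 * R + 89)) / d := by
      rw [hU]; ring
    rw [hUeq, div_le_div_iff₀ hd0 hmd0]
    have hB1' : π * (20 * N₂ + 5) ≤ 84 * N₂ := by
      nlinarith only [hπ4, hN₂big, Real.pi_nonneg]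
    have hB2' : (12 * N₂ + 16 * d + 16 * R + 89) * md ≤ 106 * N₂ * d := by
      rw [hR]
      nlinarith only [
        mul_le_mul_of_nonneg_left hmd2d (show (0:ℝ) ≤ 44 * N₂ by linarith only [hN₂0]),
        mul_le_mul_of_nonneg_left hmdN₂ (show (0:ℝ) ≤ 16 * d by linarith only [hd0]),
        mul_le_mul_of_nonneg_left hmd2d (show (0:ℝ) ≤ (121:ℝ)/2 by norm_num),
        mul_nonneg (show (0:ℝ) ≤ N₂ - 121 by linarith only [hN₂big]) (le_of_lt hd0),
        hN₂big, hd0]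
    have hnn2 : (0:ℝ) ≤ (12 * N₂ + 16 * d + 16 * R + 89) * md :=
      mul_nonneg (by linarith only [hN₂0, hd0, hR0]) (le_of_lt hmd0)
    calc 2 * N₂ * (π * (20 * N₂ + 5)) * (12 * N₂ + 16 * d + 16 * R + 89) * md
        = (2 * N₂) * ((π * (20 * N₂ + 5)) * ((12 * N₂ + 16 * d + 16 * R + 89) * md)) := by
          ring
      _ ≤ (2 * N₂) * ((84 * N₂) * (106 * N₂ * d)) := by
          apply mul_le_mul_of_nonneg_left ?_ (by linarith only [hN₂0] : (0:ℝ) ≤ 2 * N₂)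
          apply mul_le_mul hB1' hB2' hnn2 (by linarith only [hN₂0])
      _ = 17808 * N₂ ^ 3 * d := by ring
      _ ≤ 1000000 * N₂ ^ 3 * d := by
          nlinarith only [mul_pos (pow_pos hN₂0 3) hd0]
  have hMU : (M:ℝ) * U ≤ (2 * N₂) * U := mul_le_mul_of_nonneg_right hMle hU0
  calc (X.ncard : ℝ) = ((F.card : ℝ)) := by rw [hncard]
    _ ≤ ∑ a ∈ Finset.Icc 1 M, (((Fa a).card : ℝ)) := hsumR
    _ ≤ (M:ℝ) * U := hsumU
    _ ≤ (2 * N₂) * U := hMU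
    _ ≤ 1000000 * N₂ ^ 3 / md := hfinal

/-- **Cubic sup-counting estimate, part (iii)**: taking the supremum in `n` and
counting `(n₁₂, n₂, n₃)`, where `p.1` plays the role of `n₁₂ = q`, `p.2.1` that of `n₂`,
and `p.2.2` that of `n₃` (so `n₁ = q − n₂`). -/
theorem sup_counting_iii :
    ∃ C : ℝ, 0 < C ∧
      ∀ ε₀ ε₁ ε₂ ε₃ : ℝ, IsSign ε₀ → IsSign ε₁ → IsSign ε₂ → IsSign ε₃ →
        ∀ N₁₂ N₂ N₃ : ℝ, 1 ≤ N₁₂ → 1 ≤ N₂ → 1 ≤ N₃ →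
          ∀ m : ℤ, ∀ n : Fin 3 → ℤ,
            (({p : (Fin 3 → ℤ) × (Fin 3 → ℤ) × (Fin 3 → ℤ) |
                dy N₁₂ p.1 ∧ dy N₂ p.2.1 ∧ dy N₃ p.2.2 ∧
                p.1 + p.2.2 = n ∧
                |ε₀ * jap n + ε₁ * jap (p.1 - p.2.1) + ε₂ * jap p.2.1 +
                  ε₃ * jap p.2.2 - (m : ℝ)| ≤ 1}).ncard : ℝ)
              ≤ C * (min N₁₂ N₂)⁻¹ * (N₁₂ * N₂) ^ 3 := by
  classical
  refine ⟨250000000, by norm_num, ?_⟩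
  intro ε₀ ε₁ ε₂ ε₃ hε₀ hε₁ hε₂ hε₃ N₁₂ N₂ N₃ h12 h2 h3 m n
  set S := {p : (Fin 3 → ℤ) × (Fin 3 → ℤ) × (Fin 3 → ℤ) |
      dy N₁₂ p.1 ∧ dy N₂ p.2.1 ∧ dy N₃ p.2.2 ∧
      p.1 + p.2.2 = n ∧
      |ε₀ * jap n + ε₁ * jap (p.1 - p.2.1) + ε₂ * jap p.2.1 +
        ε₃ * jap p.2.2 - (m : ℝ)| ≤ 1} with hS
  set md := min N₁₂ N₂ with hmd
  have hmd1 : (1:ℝ) ≤ md := le_min h12 h2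
  have hmd0 : (0:ℝ) < md := by linarith
  -- finiteness of S
  have hSsub : S ⊆ ↑(boxZ N₁₂ ×ˢ boxZ N₂ ×ˢ boxZ N₃) := by
    intro p hp
    rw [Finset.coe_product, Finset.coe_product]
    refine ⟨mem_boxZ (by linarith) hp.1.2, mem_boxZ (by linarith) hp.2.1.2,
      mem_boxZ (by linarith) hp.2.2.1.2⟩
  have hSfin : S.Finite := Set.Finite.subset (boxZ N₁₂ ×ˢ boxZ N₂ ×ˢ boxZ N₃).finite_toSet hSsub
  -- injective projection
  set pr : (Fin 3 → ℤ) × (Fin 3 → ℤ) × (Fin 3 → ℤ) → (Fin 3 → ℤ) × (Fin 3 → ℤ) :=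
    fun p => (p.1, p.2.1) with hpr
  have hprinj : Set.InjOn pr S := by
    intro p hp p' hp' he
    have e1 : p.2.2 = n - p.1 := by
      have := hp.2.2.2.1
      exact eq_sub_of_add_eq' (by rw [add_comm] at this ⊢; exact this)
    have e1' : p'.2.2 = n - p'.1 := by
      have := hp'.2.2.2.1
      exact eq_sub_of_add_eq' (by rw [add_comm] at this ⊢; exact this)
    have he' : (p.1, p.2.1) = (p'.1, p'.2.1) := he
    have h1' : p.1 = p'.1 := (Prod.ext_iff.mp he').1
    have h2' : p.2.1 = p'.2.1 := (Prod.ext_iff.mp he').2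
    have h3' : p.2.2 = p'.2.2 := by rw [e1, e1', h1']
    exact Prod.ext h1' (Prod.ext h2' h3')
  have himfin : (pr '' S).Finite := hSfin.image pr
  have hcard1 : S.ncard = (pr '' S).ncard := (Set.ncard_image_of_injOn hprinj).symm
  set G := himfin.toFinset with hG
  have hcard2 : (pr '' S).ncard = G.card := Set.ncard_eq_toFinset_card _ himfin
  -- σ for each q
  set σf : (Fin 3 → ℤ) → ℝ := fun q => (m : ℝ) - ε₀ * jap n - ε₃ * jap (n - q) with hσf
  set Xq : (Fin 3 → ℤ) → Set (Fin 3 → ℤ) := fun q =>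
    {x : Fin 3 → ℤ | jap x ≤ 2 * N₂ ∧ |ε₁ * jap (q - x) + ε₂ * jap x - σf q| ≤ 1} with hXq
  have hXqfin : ∀ q, (Xq q).Finite := by
    intro q
    apply Set.Finite.subset (boxZ N₂).finite_toSet
    intro x hx
    exact mem_boxZ (by linarith) hx.1
  -- fiber decomposition
  have hmemq : ∀ r ∈ G, r.1 ∈ boxZ N₁₂ := by
    intro r hr
    rcases himfin.mem_toFinset.mp hr with ⟨p, hpS, rfl⟩
    exact mem_boxZ (by linarith) hpS.1.2
  have hsplit := Finset.card_eq_sum_card_fiberwise hmemq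
  -- per-fiber bound
  have hfiber : ∀ q ∈ boxZ N₁₂,
      (((G.filter fun r => r.1 = q).card : ℝ)) ≤ 1000000 * N₂ ^ 3 / md := by
    intro q hqbox
    rcases Finset.eq_empty_or_nonempty (G.filter fun r => r.1 = q) with hemp | hne
    · rw [hemp]
      simp only [Finset.card_empty, Nat.cast_zero]
      positivity
    · -- q is dyadically localized
      obtain ⟨r₀, hr₀⟩ := hne
      have hr₀' := Finset.mem_filter.mp hr₀
      rcases himfin.mem_toFinset.mp hr₀'.1 with ⟨p₀, hp₀S, hp₀r⟩
      have hq1 : N₁₂ ≤ jap q := by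
        have : p₀.1 = q := by rw [← hr₀'.2, ← hp₀r]
        rw [← this]
        exact hp₀S.1.1
      -- map fibers into Xq q
      have hinto : ∀ r ∈ G.filter (fun r => r.1 = q), r.2 ∈ (hXqfin q).toFinset := by
        intro r hr
        have hr' := Finset.mem_filter.mp hr
        rcases himfin.mem_toFinset.mp hr'.1 with ⟨p, hpS, hpr2⟩
        have hq' : p.1 = q := by rw [← hr'.2, ← hpr2]
        have hx' : p.2.1 = r.2 := by rw [← hpr2]
        rw [(hXqfin q).mem_toFinset]
        constructor
        · rw [← hx']; exact hpS.2.1.2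
        · have hn22 : p.2.2 = n - p.1 := by
            have := hpS.2.2.2.1
            exact eq_sub_of_add_eq' (by rw [add_comm] at this ⊢; exact this)
          have hph := hpS.2.2.2.2
          rw [hn22, hq'] at hph
          rw [← hx', hσf]
          have heq : ε₁ * jap (q - p.2.1) + ε₂ * jap p.2.1 -
              ((m : ℝ) - ε₀ * jap n - ε₃ * jap (n - q))
              = ε₀ * jap n + ε₁ * jap (q - p.2.1) + ε₂ * jap p.2.1 +
                ε₃ * jap (n - q) - (m : ℝ) := by ring
          rw [heq]
          exact hph
      have hinj : ∀ r ∈ G.filter (fun r => r.1 = q), ∀ r' ∈ G.filter (fun r => r.1 = q),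
          r.2 = r'.2 → r = r' := by
        intro r hr r' hr' he
        have h1'' := (Finset.mem_filter.mp hr).2
        have h2'' := (Finset.mem_filter.mp hr').2
        exact Prod.ext (by rw [h1'', h2'']) he
      have hle := Finset.card_le_card_of_injOn Prod.snd hinto hinj
      calc (((G.filter fun r => r.1 = q).card : ℝ))
          ≤ (((hXqfin q).toFinset.card : ℝ)) := by exact_mod_cast hle
        _ = (((Xq q).ncard : ℝ)) := by
            rw [Set.ncard_eq_toFinset_card _ (hXqfin q)]
        _ ≤ 1000000 * N₂ ^ 3 / md := perq N₁₂ N₂ h12 h2 ε₁ ε₂ hε₁ hε₂ (σf q) q hq1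
  -- sum up
  have hsum : ((G.card : ℝ)) ≤ ((boxZ N₁₂).card : ℝ) * (1000000 * N₂ ^ 3 / md) := by
    rw [hsplit]
    push_cast
    calc ∑ q ∈ boxZ N₁₂, (((G.filter fun r => r.1 = q).card : ℝ))
        ≤ ∑ _q ∈ boxZ N₁₂, (1000000 * N₂ ^ 3 / md) := Finset.sum_le_sum hfiber
      _ = ((boxZ N₁₂).card : ℝ) * (1000000 * N₂ ^ 3 / md) := by
          rw [Finset.sum_const, nsmul_eq_mul]
  have hbox : ((boxZ N₁₂).card : ℝ) ≤ 125 * N₁₂ ^ 3 := card_boxZ h12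
  have hN₂3 : (0:ℝ) ≤ 1000000 * N₂ ^ 3 / md := by positivity
  calc (S.ncard : ℝ) = ((G.card : ℝ)) := by rw [hcard1, hcard2]
    _ ≤ ((boxZ N₁₂).card : ℝ) * (1000000 * N₂ ^ 3 / md) := hsum
    _ ≤ (125 * N₁₂ ^ 3) * (1000000 * N₂ ^ 3 / md) := by
        apply mul_le_mul_of_nonneg_right hbox hN₂3
    _ ≤ 250000000 * md⁻¹ * (N₁₂ * N₂) ^ 3 := by
        rw [mul_pow]
        rw [div_eq_mul_inv]
        have hN12 : (0:ℝ) < N₁₂ ^ 3 := by positivity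
        have hN2 : (0:ℝ) < N₂ ^ 3 := by positivity
        have hmdi : (0:ℝ) < md⁻¹ := by positivity
        nlinarith only [hN12, hN2, hmdi, mul_pos (mul_pos hN12 hN2) hmdi]
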